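/- Let A be an n×n invertible symmetric real matrix, J a p×p symmetric real matrix with J·J = I_p, and ρ > 0. Let X be an n×p real matrix with XᵀAX = J, and let ξ, η be n×p real matrices tangent at X (ξᵀAX + XᵀAξ = 0 and ηᵀAX + XᵀAη = 0). Define Π_X := I_n − X(XᵀX)⁻¹Xᵀ, S_X := A − A X J Xᵀ A, P_X(Y) := Y − X·J·sym(XᵀAY), B_{X,ξ,η} := ξ·XᵀAη + η·XᵀAξ, B'_{X,ξ,η} := sym(Xξᵀ)·A·η + sym(Xηᵀ)·A·ξ − sym(ξηᵀ)·A·X, and C_{X,ξ,η} := sym(A·sym(XJξᵀ)·A·S_X)·η + sym(A·sym(XJηᵀ)·A·S_X)·ξ − sym(A·S_X·sym(ξηᵀ)·A)·X·J. Let Ω_ξ := XᵀAξ and Ω_η := XᵀAη. Then P_X((ρ·XXᵀ + A⁻¹Π_XA⁻¹)·(ρ⁻¹·A·B'_{X,ξ,η} − 2·C_{X,ξ,η})) = A⁻¹·Π_X·(ρ⁻¹·B_{X,ξ,η} − 2·A⁻¹·C_{X,ξ,η}) + 2·P_X(X·(−ρ·Xᵀ·C_{X,ξ,η} + sym(Ω_ξ·Ω_η))).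 -/

import Mathlib

open Matrix

/-- The symmetric part of a square matrix. -/
noncomputable def msym {m : Type*} (S : Matrix m m ℝ) : Matrix m m ℝ :=
  (1 / 2 : ℝ) • (S + Sᵀ)

/-- The projected Christoffel function for the metric `G¹`:
`P_X(Γ¹_X(ξ,η)) = A⁻¹Pi_X(ρ⁻¹B − 2A⁻¹C) + 2P_X(X(−ρXᵀC + sym(Ω_ξΩ_η)))`. -/
theorem projected_Christoffel_G1
    (n p : ℕ) (hpn : p ≤ n)
    (A : Matrix (Fin n) (Fin n) ℝ) (hA : Aᵀ = A) (hAinv : IsUnit A)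
    (J : Matrix (Fin p) (Fin p) ℝ) (hJ : Jᵀ = J) (hJ2 : J * J = 1)
    (ρ : ℝ) (hρ : 0 < ρ)
    (X : Matrix (Fin n) (Fin p) ℝ) (hX : Xᵀ * A * X = J)
    (ξ η : Matrix (Fin n) (Fin p) ℝ)
    (hξ : ξᵀ * A * X + Xᵀ * A * ξ = 0)
    (hη : ηᵀ * A * X + Xᵀ * A * η = 0)
    (Pi : Matrix (Fin n) (Fin n) ℝ) (hPi : Pi = 1 - X * (Xᵀ * X)⁻¹ * Xᵀ)
    (S : Matrix (Fin n) (Fin n) ℝ) (hS : S = A - A * X * J * Xᵀ * A)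
    (P : Matrix (Fin n) (Fin p) ℝ → Matrix (Fin n) (Fin p) ℝ)
    (hP : ∀ Y, P Y = Y - X * J * msym (Xᵀ * A * Y))
    (B : Matrix (Fin n) (Fin p) ℝ)
    (hB : B = ξ * (Xᵀ * A * η) + η * (Xᵀ * A * ξ))
    (B' : Matrix (Fin n) (Fin p) ℝ)
    (hB' : B' = msym (X * ξᵀ) * A * η + msym (X * ηᵀ) * A * ξ - msym (ξ * ηᵀ) * A * X)
    (C : Matrix (Fin n) (Fin p) ℝ)
    (hC : C = msym (A * msym (X * J * ξᵀ) * A * S) * η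
      + msym (A * msym (X * J * ηᵀ) * A * S) * ξ
      - msym (A * S * msym (ξ * ηᵀ) * A) * X * J)
    (Ωξ Ωη : Matrix (Fin p) (Fin p) ℝ)
    (hΩξ : Ωξ = Xᵀ * A * ξ) (hΩη : Ωη = Xᵀ * A * η) :
    P ((ρ • (X * Xᵀ) + A⁻¹ * Pi * A⁻¹) * (ρ⁻¹ • (A * B') - (2 : ℝ) • C))
      = A⁻¹ * Pi * (ρ⁻¹ • B - (2 : ℝ) • (A⁻¹ * C))
        + (2 : ℝ) • P (X * (-(ρ • (Xᵀ * C)) + msym (Ωξ * Ωη))) := by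
  -- X has full column rank, so Xᵀ X is invertible
  have hU : IsUnit (Xᵀ * X) := by
    rw [← Matrix.mulVec_injective_iff_isUnit]
    intro a b hab
    have h0 : ∀ v, (Xᵀ * X).mulVec v = 0 → v = 0 := by
      intro v hv
      have hXv : X.mulVec v = 0 := by
        have h1 : v ⬝ᵥ (Xᵀ * X).mulVec v = X.mulVec v ⬝ᵥ X.mulVec v := by
          rw [← Matrix.mulVec_mulVec, Matrix.dotProduct_mulVec, Matrix.vecMul_transpose]
        rw [hv, dotProduct_zero] at h1
        exact (dotProduct_self_eq_zero).mp h1.symm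
      have hJv : J.mulVec v = 0 := by
        rw [← hX, ← Matrix.mulVec_mulVec, ← Matrix.mulVec_mulVec, hXv, Matrix.mulVec_zero,
          Matrix.mulVec_zero]
      have := congrArg J.mulVec hJv
      rwa [Matrix.mulVec_mulVec, hJ2, Matrix.one_mulVec, Matrix.mulVec_zero] at this
    have hsub : (Xᵀ * X).mulVec (a - b) = 0 := by
      rw [Matrix.mulVec_sub, hab, sub_self]
    exact sub_eq_zero.mp (h0 _ hsub)
  have hUdet : IsUnit (Xᵀ * X).det := (Matrix.isUnit_iff_isUnit_det _).mp hU
  have hinv1 : (Xᵀ * X)⁻¹ * (Xᵀ * X) = 1 := Matrix.nonsing_inv_mul _ hUdet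
  have hinv2 : (Xᵀ * X) * (Xᵀ * X)⁻¹ = 1 := Matrix.mul_nonsing_inv _ hUdet
  have hPiX : Pi * X = 0 := by
    rw [hPi, Matrix.sub_mul, Matrix.one_mul]
    simp only [Matrix.mul_assoc]
    rw [hinv1, Matrix.mul_one, sub_self]
  have hXtPi : Xᵀ * Pi = 0 := by
    rw [hPi, Matrix.mul_sub, Matrix.mul_one]
    simp only [← Matrix.mul_assoc]
    rw [hinv2, Matrix.one_mul, sub_self]
  have hAdet : IsUnit A.det := (Matrix.isUnit_iff_isUnit_det A).mp hAinv
  have hAiA : A⁻¹ * A = 1 := Matrix.nonsing_inv_mul A hAdet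
  have hAAi : A * A⁻¹ = 1 := Matrix.mul_nonsing_inv A hAdet
  have hAi : ∀ M : Matrix (Fin n) (Fin p) ℝ, A⁻¹ * (A * M) = M := by
    intro M; rw [← Matrix.mul_assoc, hAiA, Matrix.one_mul]
  have hskξ : ξᵀ * (A * X) = -(Xᵀ * (A * ξ)) := by
    rw [← Matrix.mul_assoc, ← Matrix.mul_assoc]
    exact eq_neg_of_add_eq_zero_left hξ
  have hskη : ηᵀ * (A * X) = -(Xᵀ * (A * η)) := by
    rw [← Matrix.mul_assoc, ← Matrix.mul_assoc]
    exact eq_neg_of_add_eq_zero_left hη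
  set K : Matrix (Fin p) (Fin p) ℝ := (1 / 2 : ℝ) • (ξᵀ * (A * η) + ηᵀ * (A * ξ)) with hK
  have hKt : Kᵀ = K := by
    rw [hK]
    simp [Matrix.transpose_smul, Matrix.transpose_add, Matrix.transpose_mul,
      Matrix.transpose_transpose, hA, Matrix.mul_assoc, add_comm]
  have hB'B : B' = B + X * K := by
    rw [hB', hB, hK]
    simp only [msym, Matrix.smul_mul, Matrix.add_mul, Matrix.mul_add, Matrix.mul_smul,
      Matrix.transpose_mul, Matrix.transpose_transpose, hA, Matrix.mul_assoc, hskξ, hskη,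
      Matrix.mul_neg, smul_add, smul_neg]
    module
  have hPiB' : Pi * B' = Pi * B := by
    rw [hB'B, Matrix.mul_add, ← Matrix.mul_assoc, hPiX, Matrix.zero_mul, add_zero]
  have hΩs : Ωηᵀ * Ωξᵀ = Ωη * Ωξ := by
    rw [hΩξ, hΩη]
    simp only [Matrix.transpose_mul, Matrix.transpose_transpose, hA, Matrix.mul_assoc,
      hskξ, hskη, Matrix.mul_neg, Matrix.neg_mul, neg_neg]
  have h2sym : (2 : ℝ) • msym (Ωξ * Ωη) = Ωξ * Ωη + Ωη * Ωξ := by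
    rw [msym, Matrix.transpose_mul, hΩs, smul_smul]
    norm_num
  have hXAB' : Xᵀ * (A * B') = (2 : ℝ) • msym (Ωξ * Ωη) + J * K := by
    rw [h2sym, hB'B, hB, hΩξ, hΩη]
    simp only [Matrix.mul_add, ← Matrix.mul_assoc, hX]
  have key : (ρ • (X * Xᵀ) + A⁻¹ * Pi * A⁻¹) * (ρ⁻¹ • (A * B') - (2 : ℝ) • C)
      = A⁻¹ * Pi * (ρ⁻¹ • B - (2 : ℝ) • (A⁻¹ * C)) + X * (J * K)
        + (2 : ℝ) • (X * (-(ρ • (Xᵀ * C)) + msym (Ωξ * Ωη))) := by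
    simp only [Matrix.add_mul, Matrix.mul_sub, Matrix.sub_mul, Matrix.mul_add,
      Matrix.smul_mul, Matrix.mul_smul, Matrix.mul_assoc, hAi, hPiB', hXAB',
      smul_add, smul_sub, smul_neg, Matrix.mul_neg, smul_smul,
      mul_inv_cancel₀ hρ.ne', inv_mul_cancel₀ hρ.ne', one_smul]
    match_scalars <;> field_simp
  have hPA : ∀ W : Matrix (Fin n) (Fin p) ℝ, P (A⁻¹ * Pi * W) = A⁻¹ * Pi * W := by
    intro W
    rw [hP]
    have h0 : Xᵀ * A * (A⁻¹ * Pi * W) = 0 := by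
      simp only [← Matrix.mul_assoc]
      rw [Matrix.mul_assoc Xᵀ A A⁻¹, hAAi, Matrix.mul_one, hXtPi, Matrix.zero_mul]
    rw [h0]
    simp [msym]
  have hPXJK : P (X * (J * K)) = 0 := by
    rw [hP]
    have h1 : Xᵀ * A * (X * (J * K)) = K := by
      simp only [← Matrix.mul_assoc, hX, hJ2, Matrix.one_mul]
    have h2 : msym K = K := by
      rw [msym, hKt, ← two_smul ℝ K, smul_smul]
      norm_num
    rw [h1, h2, ← Matrix.mul_assoc, sub_self]
  have hPadd : ∀ Y Z, P (Y + Z) = P Y + P Z := by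
    intro Y Z
    simp only [hP, msym, Matrix.mul_add, Matrix.transpose_add, smul_add, Matrix.mul_smul]
    abel
  have hPsmul : ∀ (c : ℝ) Y, P (c • Y) = c • P Y := by
    intro c Y
    simp only [hP, msym, Matrix.mul_smul, Matrix.mul_add, Matrix.transpose_smul, smul_add,
      smul_sub, smul_smul]
    module
  rw [key, hPadd, hPadd, hPA, hPXJK, add_zero, hPsmul]
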